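/- For a positive even integer j, a positive integer k, and any nonzero real r, (2/π)∫₀^π H(r sin(jx)) sin²(kx) dx = 1/2, where H is the Heaviside step function (H(s)=1 for s>0, H(s)=0 for s<0, H(0)=1). -/

import Mathlib

open Real

theorem stmt5 (j k : ℕ) (hj : 0 < j) (hje : Even j) (hk : 0 < k) (r : ℝ) (hr : r ≠ 0) :
    (2 / π) * ∫ x in (0:ℝ)..π,
        (if 0 ≤ r * Real.sin (j * x) then (1:ℝ) else 0) * Real.sin (k * x) ^ 2 = 1 / 2 := by
  set f : ℝ → ℝ := fun x => (if 0 ≤ r * Real.sin (j * x) then (1:ℝ) else 0) * Real.sin (k * x) ^ 2 with hf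
  have hmeas : Measurable f := by
    apply Measurable.mul
    · exact Measurable.ite (measurableSet_le measurable_const (by fun_prop)) measurable_const
        measurable_const
    · fun_prop
  haveI : MeasureTheory.IsFiniteMeasure
      (MeasureTheory.volume.restrict (Set.uIoc (0:ℝ) π)) := by
    constructor
    rw [MeasureTheory.Measure.restrict_apply_univ, Set.uIoc_of_le Real.pi_pos.le]
    exact measure_Ioc_lt_top
  have hInt : IntervalIntegrable f MeasureTheory.volume 0 π := by
    rw [intervalIntegrable_iff]
    apply MeasureTheory.Integrable.mono' (MeasureTheory.integrable_const (1:ℝ))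
      hmeas.aestronglyMeasurable.restrict
    filter_upwards with x
    simp only [hf, Real.norm_eq_abs, abs_mul]
    calc |if 0 ≤ r * Real.sin (j * x) then (1:ℝ) else 0| * |Real.sin (k * x) ^ 2|
        ≤ 1 * 1 := by
          apply mul_le_mul
          · split <;> simp
          · rw [abs_of_nonneg (sq_nonneg _)]
            nlinarith [Real.neg_one_le_sin (k*x), Real.sin_le_one (k*x)]
          · positivity
          · norm_num
      _ = 1 := by ring
  have hsub : ∫ x in (0:ℝ)..π, f (π - x) = ∫ x in (0:ℝ)..π, f x := by
    rw [intervalIntegral.integral_comp_sub_left f π]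
    norm_num
  have hS : MeasureTheory.volume {x : ℝ | Real.sin (j * x) = 0} = 0 := by
    apply Set.Countable.measure_zero
    have hsub' : {x : ℝ | Real.sin (j * x) = 0} ⊆ Set.range (fun n : ℤ => (n : ℝ) * π / j) := by
      intro x hx
      rw [Set.mem_setOf_eq, Real.sin_eq_zero_iff] at hx
      obtain ⟨n, hn⟩ := hx
      refine ⟨n, ?_⟩
      have hj' : (j : ℝ) ≠ 0 := Nat.cast_ne_zero.mpr hj.ne'
      field_simp
      linarith
    exact Set.Countable.mono hsub' (Set.countable_range _)
  have hae : ∀ᵐ x ∂(MeasureTheory.volume : MeasureTheory.Measure ℝ),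
      x ∈ Set.uIoc (0:ℝ) π → f x + f (π - x) = Real.sin (k * x) ^ 2 := by
    have hmem := (MeasureTheory.measure_eq_zero_iff_ae_notMem).mp hS
    filter_upwards [hmem] with x hx _
    have hxne : Real.sin (j * x) ≠ 0 := hx
    have hsin2 : Real.sin (k * (π - x)) ^ 2 = Real.sin (k * x) ^ 2 := by
      have h1 : (k : ℝ) * (π - x) = k * π - k * x := by ring
      rw [h1, Real.sin_sub, Real.sin_nat_mul_pi]
      have h2 := Real.sin_sq_add_cos_sq ((k:ℝ) * π)
      have h3 : Real.sin ((k:ℝ) * π) = 0 := Real.sin_nat_mul_pi k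
      have h4 : Real.cos ((k:ℝ) * π) ^ 2 = 1 := by nlinarith
      calc (0 * Real.cos ((k:ℝ)*x) - Real.cos ((k:ℝ)*π) * Real.sin ((k:ℝ)*x)) ^ 2
          = Real.cos ((k:ℝ)*π) ^ 2 * Real.sin ((k:ℝ)*x) ^ 2 := by ring
        _ = Real.sin ((k:ℝ)*x) ^ 2 := by rw [h4]; ring
    have hsinj : Real.sin (j * (π - x)) = - Real.sin (j * x) := by
      obtain ⟨m, hm⟩ := hje
      have h1 : (j : ℝ) * (π - x) = (m : ℝ) * (2 * π) - j * x := by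
        have : (j : ℝ) = m + m := by exact_mod_cast congrArg (Nat.cast : ℕ → ℝ) hm
        rw [this]; ring
      have h2 : Real.sin ((m : ℝ) * (2 * π)) = 0 := by
        have : (m : ℝ) * (2 * π) = ((2 * m : ℕ) : ℝ) * π := by push_cast; ring
        rw [this]; exact Real.sin_nat_mul_pi _
      rw [h1, Real.sin_sub, h2, Real.cos_nat_mul_two_pi]
      ring
    have hne : r * Real.sin (j * x) ≠ 0 := mul_ne_zero hr hxne
    simp only [hf, hsinj, hsin2, mul_neg]
    rcases lt_or_gt_of_ne hne with h | h
    · rw [if_neg (not_le.mpr h), if_pos (by linarith)]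
      ring
    · rw [if_pos h.le, if_neg (by simpa using h)]
      ring
  have key : (∫ x in (0:ℝ)..π, f x) + (∫ x in (0:ℝ)..π, f x) = π / 2 := by
    nth_rewrite 2 [← hsub]
    rw [← intervalIntegral.integral_add hInt (by simpa using (hInt.comp_sub_left π).symm)]
    rw [intervalIntegral.integral_congr_ae hae]
    have h2k : (2 * (k:ℝ)) ≠ 0 := by positivity
    have hrw : ∀ x : ℝ, Real.sin (k * x) ^ 2 = 1/2 - Real.cos (2 * k * x) / 2 := by
      intro x
      have h2 : Real.cos (2 * k * x) = 2 * Real.cos ((k:ℝ)*x)^2 - 1 := by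
        rw [show 2 * (k:ℝ) * x = 2 * (k * x) by ring]; exact Real.cos_two_mul _
      have hpy := Real.sin_sq_add_cos_sq ((k:ℝ) * x)
      linarith
    simp_rw [hrw]
    have hc : IntervalIntegrable (fun x => Real.cos (2 * k * x) / 2) MeasureTheory.volume 0 π :=
      ((Real.continuous_cos.comp (by continuity)).div_const 2).intervalIntegrable 0 π
    rw [intervalIntegral.integral_sub intervalIntegrable_const hc]
    have hcos : ∫ x in (0:ℝ)..π, Real.cos (2 * k * x) = 0 := by
      rw [intervalIntegral.integral_comp_mul_left Real.cos h2k]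
      have h3 : Real.sin (2 * (k:ℝ) * π) = 0 := by
        have : 2 * (k:ℝ) * π = ((2 * k : ℕ) : ℝ) * π := by push_cast; ring
        rw [this]; exact Real.sin_nat_mul_pi _
      norm_num [integral_cos, h3]
    rw [intervalIntegral.integral_const, intervalIntegral.integral_div, hcos]
    simp [smul_eq_mul]
    ring
  have hπ : π ≠ 0 := Real.pi_ne_zero
  field_simp
  linarith
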